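/- Let L > 1, α > 0, C₁, C₂ > 0, z ∈ ℂ, and let N ≥ 1 be an integer. Let G, g : Λ × Λ → ℂ be measurable with |G(x,y)| ≤ C₁ e^{−α|x−y|} and |g(y,x')| ≤ C₂ e^{−α|y−x'|} for all (x,y), (y,x') ∈ Λ × Λ. Define r_N(x,x') := −z ∫_Λ ((i · fl(x,y,x'))^N / N!) · G(x,y) · g(y,x') dy. Then there exists a constant C₃ > 0 depending only on α, C₁, C₂, |z| and N (in particular independent of L) such that |r_N(x,x')| ≤ C₃ e^{−(α/4)|x−x'|} for all x, x' ∈ Λ. -/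

import Mathlib

open MeasureTheory Real

noncomputable section

/-- The open cube `Λ = (−L/2, L/2)³ ⊂ ℝ³`. -/
def cube (L : ℝ) : Set (EuclideanSpace ℝ (Fin 3)) :=
  {x | ∀ i, x i ∈ Set.Ioo (-(L / 2)) (L / 2)}

/-- The magnetic phase `φ(x,x') = (x₂x₁' − x₁x₂')/2`. -/
def phi (x x' : EuclideanSpace ℝ (Fin 3)) : ℝ := (x 1 * x' 0 - x 0 * x' 1) / 2

/-- The magnetic flux through the triangle with vertices `x`, `y`, `x'`. -/
def fl (x y x' : EuclideanSpace ℝ (Fin 3)) : ℝ := phi x y + phi y x' + phi x' x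

lemma measurableSet_cube (L : ℝ) : MeasurableSet (cube L) := by
  have : cube L = ⋂ i, (fun x : EuclideanSpace ℝ (Fin 3) => x i) ⁻¹'
      (Set.Ioo (-(L/2)) (L/2)) := by
    ext x; simp [cube]
  rw [this]
  exact MeasurableSet.iInter fun i =>
    measurableSet_Ioo.preimage (by fun_prop)

lemma coord_abs_le_norm (x : EuclideanSpace ℝ (Fin 3)) (i : Fin 3) : |x i| ≤ ‖x‖ := by
  rw [EuclideanSpace.norm_eq]
  have h1 : |x i| = Real.sqrt (‖x i‖ ^ 2) := by
    rw [Real.sqrt_sq_eq_abs, Real.norm_eq_abs, abs_abs]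
  rw [h1]
  apply Real.sqrt_le_sqrt
  exact Finset.single_le_sum (fun j _ => sq_nonneg ‖x j‖) (Finset.mem_univ i)

lemma abs_fl_le (x y x' : EuclideanSpace ℝ (Fin 3)) :
    |fl x y x'| ≤ ‖x - y‖ * ‖x' - y‖ := by
  have h : fl x y x' = ((x' - y) 1 * (x - y) 0 - (x' - y) 0 * (x - y) 1) / 2 := by
    simp only [fl, phi, PiLp.sub_apply]; ring
  have h0 : |(x - y) 0| ≤ ‖x - y‖ := coord_abs_le_norm _ 0
  have h1 : |(x - y) 1| ≤ ‖x - y‖ := coord_abs_le_norm _ 1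
  have h0' : |(x' - y) 0| ≤ ‖x' - y‖ := coord_abs_le_norm _ 0
  have h1' : |(x' - y) 1| ≤ ‖x' - y‖ := coord_abs_le_norm _ 1
  have htri : |(x' - y) 1 * (x - y) 0 - (x' - y) 0 * (x - y) 1| ≤
      |(x' - y) 1| * |(x - y) 0| + |(x' - y) 0| * |(x - y) 1| := by
    calc _ ≤ |(x' - y) 1 * (x - y) 0| + |(x' - y) 0 * (x - y) 1| := abs_sub _ _
    _ = _ := by rw [abs_mul, abs_mul]
  rw [h, abs_div, abs_two]
  rw [div_le_iff₀ (by norm_num : (0:ℝ) < 2)]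
  nlinarith [abs_nonneg ((x - y) 0), abs_nonneg ((x - y) 1),
    abs_nonneg ((x' - y) 0), abs_nonneg ((x' - y) 1), norm_nonneg (x - y),
    norm_nonneg (x' - y)]

lemma pow_div_factorial_le_exp' (t : ℝ) (ht : 0 ≤ t) (k : ℕ) :
    t ^ k / k.factorial ≤ Real.exp t := by
  calc t ^ k / k.factorial
      ≤ ∑ i ∈ Finset.range (k + 1), t ^ i / i.factorial :=
        Finset.single_le_sum (f := fun i => t ^ i / (i.factorial : ℝ))
          (fun i _ => by positivity) (Finset.self_mem_range_succ k)
    _ ≤ Real.exp t := Real.sum_le_exp_of_nonneg ht _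

lemma integrable_exp_neg_norm (c : ℝ) (hc : 0 < c) :
    Integrable (fun w : EuclideanSpace ℝ (Fin 3) => Real.exp (-c * ‖w‖)) := by
  set M : ℝ := max 1 (4 / c) with hM
  have hM1 : (1:ℝ) ≤ M := le_max_left _ _
  have hM2 : 4 / c ≤ M := le_max_right _ _
  have hMpos : 0 < M := lt_of_lt_of_le one_pos hM1
  have hint : Integrable (fun w : EuclideanSpace ℝ (Fin 3) =>
      M ^ 4 * (1 + ‖w‖) ^ (-(4:ℝ))) := by
    apply Integrable.const_mul
    apply integrable_one_add_norm
    simp [finrank_euclideanSpace]; norm_num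
  apply hint.mono'
    ((Continuous.aestronglyMeasurable (by fun_prop) :
      AEStronglyMeasurable (fun w : EuclideanSpace ℝ (Fin 3) =>
        Real.exp (-c * ‖w‖)) volume))
  filter_upwards with w
  set t := ‖w‖ with htdef
  have ht : 0 ≤ t := norm_nonneg w
  have key : (1 + t) ^ (4:ℕ) ≤ M ^ 4 * Real.exp (c * t) := by
    have h1 : 1 + t ≤ M * Real.exp (c / 4 * t) := by
      have e1 : 1 + t ≤ M * (1 + c / 4 * t) := by
        have h5 : 1 ≤ M * (c / 4) := by
          have e : (4 / c) * (c / 4) = 1 := by field_simp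
          calc (1:ℝ) = (4 / c) * (c / 4) := e.symm
            _ ≤ M * (c / 4) := by gcongr
        nlinarith [mul_le_mul_of_nonneg_right h5 ht]
      have e2 : 1 + c / 4 * t ≤ Real.exp (c / 4 * t) := by
        have := Real.add_one_le_exp (c / 4 * t); linarith
      calc 1 + t ≤ M * (1 + c / 4 * t) := e1
        _ ≤ M * Real.exp (c / 4 * t) := by
            exact mul_le_mul_of_nonneg_left e2 hMpos.le
    calc (1 + t) ^ (4:ℕ) ≤ (M * Real.exp (c / 4 * t)) ^ (4:ℕ) :=
          pow_le_pow_left₀ (by linarith) h1 4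
      _ = M ^ 4 * Real.exp (c * t) := by
          rw [mul_pow, ← Real.exp_nat_mul]
          norm_num
          left; ring
  have hpos : (0:ℝ) < (1 + t) ^ (4:ℕ) := by positivity
  rw [Real.norm_eq_abs, abs_of_pos (Real.exp_pos _)]
  have hrpow : (1 + t) ^ (-(4:ℝ)) = ((1 + t) ^ (4:ℕ))⁻¹ := by
    rw [Real.rpow_neg (by linarith), ← Real.rpow_natCast (1 + t) 4]
    norm_num
  rw [hrpow, neg_mul]
  calc Real.exp (-(c * t)) = (1 + t) ^ (4:ℕ) * Real.exp (-(c * t)) / (1 + t) ^ (4:ℕ) := by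
        field_simp
    _ ≤ (M ^ 4 * Real.exp (c * t)) * Real.exp (-(c * t)) / (1 + t) ^ (4:ℕ) := by
        gcongr
    _ = M ^ 4 / (1 + t) ^ (4:ℕ) := by
        rw [mul_assoc, ← Real.exp_add]; simp
    _ = M ^ 4 * ((1 + t) ^ (4:ℕ))⁻¹ := div_eq_mul_inv _ _

lemma key_scalar (α : ℝ) (hα : 0 < α) (N : ℕ) (a b f : ℝ) (ha : 0 ≤ a) (hb : 0 ≤ b)
    (hf : |f| ≤ a * b) :
    |f| ^ N / N.factorial * Real.exp (-α * a) * Real.exp (-α * b) ≤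
      ((2 * N).factorial * (2 / α) ^ (2 * N) / N.factorial) *
        Real.exp (-(α / 2) * (a + b)) := by
  have hs : 0 ≤ a + b := by linarith
  have h1 : |f| ^ N ≤ (a + b) ^ (2 * N) := by
    calc |f| ^ N ≤ (a * b) ^ N := pow_le_pow_left₀ (abs_nonneg f) hf N
      _ ≤ ((a + b) ^ 2) ^ N := pow_le_pow_left₀ (by positivity) (by nlinarith) N
      _ = (a + b) ^ (2 * N) := by rw [← pow_mul]
  have h2 : (a + b) ^ (2 * N) ≤
      (2 * N).factorial * (2 / α) ^ (2 * N) * Real.exp (α / 2 * (a + b)) := by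
    have hp := pow_div_factorial_le_exp' (α / 2 * (a + b)) (by positivity) (2 * N)
    rw [div_le_iff₀ (by positivity)] at hp
    have e : (a + b) ^ (2 * N) = (2 / α) ^ (2 * N) * (α / 2 * (a + b)) ^ (2 * N) := by
      rw [← mul_pow]
      congr 1
      field_simp
    rw [e]
    calc (2 / α) ^ (2 * N) * (α / 2 * (a + b)) ^ (2 * N)
        ≤ (2 / α) ^ (2 * N) * (Real.exp (α / 2 * (a + b)) * (2 * N).factorial) :=
          mul_le_mul_of_nonneg_left hp (by positivity)
      _ = (2 * N).factorial * (2 / α) ^ (2 * N) * Real.exp (α / 2 * (a + b)) := by ring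
  calc |f| ^ N / N.factorial * Real.exp (-α * a) * Real.exp (-α * b)
      = |f| ^ N / N.factorial * Real.exp (-α * (a + b)) := by
        rw [mul_assoc, ← Real.exp_add]; congr 2; ring
    _ ≤ ((2 * N).factorial * (2 / α) ^ (2 * N) * Real.exp (α / 2 * (a + b)))
          / N.factorial * Real.exp (-α * (a + b)) := by
        gcongr
        exact h1.trans h2
    _ = ((2 * N).factorial * (2 / α) ^ (2 * N) / N.factorial) *
          (Real.exp (α / 2 * (a + b)) * Real.exp (-α * (a + b))) := by ring
    _ = ((2 * N).factorial * (2 / α) ^ (2 * N) / N.factorial) *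
          Real.exp (-(α / 2) * (a + b)) := by
        rw [← Real.exp_add]; congr 2; ring

/-- If `|G(x,y)| ≤ C₁e^{−α|x−y|}` and `|g(y,x')| ≤ C₂e^{−α|y−x'|}` on `Λ × Λ`, then
the kernel `r_N(x,x') = −z ∫_Λ ((i fl(x,y,x'))^N/N!) G(x,y) g(y,x') dy` satisfies
`|r_N(x,x')| ≤ C₃ e^{−(α/4)|x−x'|}` with `C₃` depending only on `α, C₁, C₂, |z|, N`
(in particular independent of `L`). -/
theorem rN_kernel_bound (α C₁ C₂ : ℝ) (hα : 0 < α) (hC₁ : 0 < C₁) (hC₂ : 0 < C₂)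
    (z : ℂ) (N : ℕ) (hN : 1 ≤ N) :
    ∃ C₃ : ℝ, 0 < C₃ ∧ ∀ L : ℝ, 1 < L →
      ∀ G g : EuclideanSpace ℝ (Fin 3) → EuclideanSpace ℝ (Fin 3) → ℂ,
        Measurable (Function.uncurry G) → Measurable (Function.uncurry g) →
        (∀ x ∈ cube L, ∀ y ∈ cube L, ‖G x y‖ ≤ C₁ * Real.exp (-α * ‖x - y‖)) →
        (∀ y ∈ cube L, ∀ x' ∈ cube L, ‖g y x'‖ ≤ C₂ * Real.exp (-α * ‖y - x'‖)) →
        ∀ x ∈ cube L, ∀ x' ∈ cube L,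
          ‖-z * ∫ y in cube L,
              (Complex.I * (fl x y x' : ℝ)) ^ N / (N.factorial : ℂ) *
                G x y * g y x'‖ ≤ C₃ * Real.exp (-(α / 4) * ‖x - x'‖) := by
  set K : ℝ := (2 * N).factorial * (2 / α) ^ (2 * N) / N.factorial with hK
  have hKpos : 0 < K := by positivity
  have hcpos : 0 < α / 4 := by positivity
  set I₀ : ℝ := ∫ w : EuclideanSpace ℝ (Fin 3), Real.exp (-(α / 4) * ‖w‖) with hI₀
  have hI₀nn : 0 ≤ I₀ := integral_nonneg fun w => (Real.exp_pos _).le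
  refine ⟨‖z‖ * (C₁ * C₂ * K) * I₀ + 1, by positivity, ?_⟩
  intro L hL G g hGm hgm hGb hgb x hx x' hx'
  set D := Real.exp (-(α / 4) * ‖x - x'‖) with hD
  have hDpos : 0 < D := Real.exp_pos _
  have hint : Integrable (fun y : EuclideanSpace ℝ (Fin 3) =>
      Real.exp (-(α / 4) * ‖x - y‖)) :=
    (integrable_exp_neg_norm (α / 4) hcpos).comp_sub_left x
  have hmaj : Integrable (fun y : EuclideanSpace ℝ (Fin 3) =>
      C₁ * C₂ * K * D * Real.exp (-(α / 4) * ‖x - y‖)) := hint.const_mul _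
  have hpt : ∀ y ∈ cube L,
      ‖(Complex.I * (fl x y x' : ℝ)) ^ N / (N.factorial : ℂ) * G x y * g y x'‖ ≤
        C₁ * C₂ * K * D * Real.exp (-(α / 4) * ‖x - y‖) := by
    intro y hy
    have hfl : |fl x y x'| ≤ ‖x - y‖ * ‖y - x'‖ := by
      have h := abs_fl_le x y x'
      rwa [norm_sub_rev x' y] at h
    have hnorm : ‖(Complex.I * (fl x y x' : ℝ)) ^ N / (N.factorial : ℂ) * G x y * g y x'‖
        = |fl x y x'| ^ N / N.factorial * ‖G x y‖ * ‖g y x'‖ := by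
      rw [norm_mul, norm_mul, norm_div, norm_pow, norm_mul, Complex.norm_I,
        Complex.norm_real, Complex.norm_natCast, one_mul, Real.norm_eq_abs]
    rw [hnorm]
    have hkey := key_scalar α hα N ‖x - y‖ ‖y - x'‖ (fl x y x')
      (norm_nonneg _) (norm_nonneg _) hfl
    have hexp : Real.exp (-(α / 2) * (‖x - y‖ + ‖y - x'‖)) ≤
        D * Real.exp (-(α / 4) * ‖x - y‖) := by
      rw [hD, ← Real.exp_add]
      apply Real.exp_le_exp.mpr
      have htri : ‖x - x'‖ ≤ ‖x - y‖ + ‖y - x'‖ := by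
        have := dist_triangle x y x'
        simpa [dist_eq_norm] using this
      nlinarith [norm_nonneg (x - y), norm_nonneg (y - x')]
    calc |fl x y x'| ^ N / N.factorial * ‖G x y‖ * ‖g y x'‖
        ≤ |fl x y x'| ^ N / N.factorial * (C₁ * Real.exp (-α * ‖x - y‖)) *
            (C₂ * Real.exp (-α * ‖y - x'‖)) := by
          gcongr
          · exact hGb x hx y hy
          · exact hgb y hy x' hx'
      _ = C₁ * C₂ * (|fl x y x'| ^ N / N.factorial * Real.exp (-α * ‖x - y‖) *
            Real.exp (-α * ‖y - x'‖)) := by ring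
      _ ≤ C₁ * C₂ * (K * Real.exp (-(α / 2) * (‖x - y‖ + ‖y - x'‖))) := by
          have := mul_le_mul_of_nonneg_left hkey (by positivity : (0:ℝ) ≤ C₁ * C₂)
          linarith
      _ ≤ C₁ * C₂ * (K * (D * Real.exp (-(α / 4) * ‖x - y‖))) := by
          gcongr
      _ = C₁ * C₂ * K * D * Real.exp (-(α / 4) * ‖x - y‖) := by ring
  have hset : (∫ y in cube L, Real.exp (-(α / 4) * ‖x - y‖)) ≤ I₀ := by
    have h1 := setIntegral_le_integral (s := cube L) hint
      (Filter.Eventually.of_forall fun y => (Real.exp_pos _).le)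
    have h2 : (∫ y, Real.exp (-(α / 4) * ‖x - y‖)) = I₀ :=
      integral_sub_left_eq_self (fun w : EuclideanSpace ℝ (Fin 3) =>
        Real.exp (-(α / 4) * ‖w‖)) volume x
    linarith
  calc ‖-z * ∫ y in cube L,
        (Complex.I * (fl x y x' : ℝ)) ^ N / (N.factorial : ℂ) * G x y * g y x'‖
      = ‖z‖ * ‖∫ y in cube L,
          (Complex.I * (fl x y x' : ℝ)) ^ N / (N.factorial : ℂ) * G x y * g y x'‖ := by
        rw [norm_mul, norm_neg]
    _ ≤ ‖z‖ * ∫ y in cube L,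
          ‖(Complex.I * (fl x y x' : ℝ)) ^ N / (N.factorial : ℂ) * G x y * g y x'‖ :=
        mul_le_mul_of_nonneg_left (norm_integral_le_integral_norm _) (norm_nonneg z)
    _ ≤ ‖z‖ * ∫ y in cube L, C₁ * C₂ * K * D * Real.exp (-(α / 4) * ‖x - y‖) := by
        apply mul_le_mul_of_nonneg_left ?_ (norm_nonneg z)
        apply integral_mono_of_nonneg
          (Filter.Eventually.of_forall fun y => norm_nonneg _) hmaj.restrict
        exact ae_restrict_of_forall_mem (measurableSet_cube L) hpt
    _ = ‖z‖ * (C₁ * C₂ * K * D * ∫ y in cube L, Real.exp (-(α / 4) * ‖x - y‖)) := by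
        rw [MeasureTheory.integral_const_mul]
    _ ≤ ‖z‖ * (C₁ * C₂ * K * D * I₀) := by
        gcongr
    _ = ‖z‖ * (C₁ * C₂ * K) * I₀ * D := by ring
    _ ≤ (‖z‖ * (C₁ * C₂ * K) * I₀ + 1) * D := by nlinarith
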